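/- Every deterministic classical process is Markov for its causal structure: for a deterministic process κ^f over split nodes X_1,…,X_n given by a function f: ∏_i X_i^out → ∏_i X_i^in, let G be the directed graph with an arrow X_i → X_j whenever the component X_j^in of f depends on the input X_i^out. Then κ^f = ∏_{i=1}^n P(X_i^in | Pa(X_i)^out), where Pa(X_i) is the parent set of X_i in G and each P(X_i^in | Pa(X_i)^out) is a classical channel (here the deterministic channel δ(X_i^in, f_i(Pa(X_i)^out))). -/

import Mathlib

open BigOperators

/-- The joint index of the split nodes: an assignment of a value to each input and each
output variable. -/
abbrev NIdx {n : ℕ} (In Out : Fin n → Type) := (i : Fin n) → In i × Out i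

/-- `P` is a classical channel (conditional probability distribution) from `X` to `Y`. -/
def IsClassicalChannel {X Y : Type} [Fintype Y] (P : X → Y → ℝ) : Prop :=
  (∀ x y, 0 ≤ P x y) ∧ ∀ x, ∑ y, P x y = 1

/-- `κ` is a classical process over the split nodes `X_1, …, X_n`:
it takes values in `[0,1]` and yields total probability one for every choice of classical
channels `P(X_i^out|X_i^in)` at the nodes. -/
def IsClassicalProcess {n : ℕ} (In Out : Fin n → Type)
    [∀ i, Fintype (In i)] [∀ i, Fintype (Out i)]
    (κ : NIdx In Out → ℝ) : Prop :=
  (∀ p, 0 ≤ κ p ∧ κ p ≤ 1) ∧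
    ∀ Q : (i : Fin n) → In i → Out i → ℝ, (∀ i, IsClassicalChannel (Q i)) →
      ∑ p : NIdx In Out, κ p * ∏ i, Q i (p i).1 (p i).2 = 1

/-- The deterministic classical process associated to `f : ∏_i X_i^out → ∏_i X_i^in`. -/
def detProc {n : ℕ} {In Out : Fin n → Type} [∀ i, DecidableEq (In i)]
    (f : ((i : Fin n) → Out i) → ((i : Fin n) → In i)) : NIdx In Out → ℝ :=
  fun p => if (fun i => (p i).1) = f (fun i => (p i).2) then 1 else 0

/-- The component `X_j^in` of `f` depends on `X_i^out` (this is the arrow `X_i → X_j` of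
the causal structure of the deterministic process `κ^f`). -/
def FDependsOn {n : ℕ} {In Out : Fin n → Type}
    (f : ((i : Fin n) → Out i) → ((i : Fin n) → In i)) (i j : Fin n) : Prop :=
  ∃ (o : (i : Fin n) → Out i) (y : Out i), f (Function.update o i y) j ≠ f o j


private lemma indep_of_forall {n : ℕ} {In Out : Fin n → Type}
    [∀ i, DecidableEq (Out i)]
    (f : ((i : Fin n) → Out i) → ((i : Fin n) → In i)) (i : Fin n)
    (s : Finset (Fin n)) :
    ∀ o o' : (j : Fin n) → Out j, (∀ j ∉ s, o j = o' j) →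
      (∀ j ∈ s, ¬ FDependsOn f j i) → f o i = f o' i := by
  induction s using Finset.induction with
  | empty =>
    intro o o' h _
    have : o = o' := funext fun j => h j (by simp)
    rw [this]
  | @insert a s ha ih =>
    intro o o' h hdep
    have hna : ¬ FDependsOn f a i := hdep a (Finset.mem_insert_self a s)
    have key : ∀ o₀ (y : Out a), f (Function.update o₀ a y) i = f o₀ i := by
      intro o₀ y
      by_contra hc
      exact hna ⟨o₀, y, hc⟩
    have step : f o i = f (Function.update o a (o' a)) i := (key o (o' a)).symm
    rw [step]
    apply ih
    · intro j hj
      by_cases hja : j = a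
      · subst hja; simp [Function.update_self]
      · rw [Function.update_of_ne hja]
        exact h j (by simp [hj, hja])
    · intro j hj
      exact hdep j (Finset.mem_insert_of_mem hj)

/-- **Every deterministic classical process is Markov for its causal structure**:
`κ^f` factorizes as `∏_i P(X_i^in | Pa(X_i)^out)`, where `Pa(X_i)` is the set of nodes
`X_j` such that `X_i^in` depends on `X_j^out` through `f`, and each factor is the
deterministic channel `δ(X_i^in, f_i(Pa(X_i)^out))`, a classical channel depending only
on the parents' output variables. -/
theorem deterministic_process_markov_for_causal_structure
    {n : ℕ} (In Out : Fin n → Type)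
    [∀ i, Fintype (In i)] [∀ i, Fintype (Out i)]
    [∀ i, DecidableEq (In i)] [∀ i, DecidableEq (Out i)]
    (f : ((i : Fin n) → Out i) → ((i : Fin n) → In i))
    (hproc : IsClassicalProcess In Out (detProc f)) :
    ∃ P : (i : Fin n) → ((j : Fin n) → Out j) → In i → ℝ,
      (∀ i, IsClassicalChannel (P i)) ∧
      (∀ i, ∀ o o' : (j : Fin n) → Out j,
        (∀ j, FDependsOn f j i → o j = o' j) → P i o = P i o') ∧
      (∀ i o xi, P i o xi = if f o i = xi then 1 else 0) ∧
      (∀ p : NIdx In Out, detProc f p = ∏ i, P i (fun j => (p j).2) ((p i).1)) := by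
  refine ⟨fun i o xi => if f o i = xi then 1 else 0, ?_, ?_, ?_, ?_⟩
  · intro i
    constructor
    · intro o xi
      dsimp only
      split <;> norm_num
    · intro o
      simp
  · intro i o o' h
    have : f o i = f o' i := by
      apply indep_of_forall f i (Finset.univ.filter fun j => o j ≠ o' j)
      · intro j hj
        simp only [Finset.mem_filter, Finset.mem_univ, true_and, not_not] at hj
        exact hj
      · intro j hj
        simp only [Finset.mem_filter, Finset.mem_univ, true_and] at hj
        intro hd
        exact hj (h j hd)
    funext xi
    dsimp only
    rw [this]
  · intro i o xi
    rfl
  · intro p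
    simp only [detProc]
    by_cases h : (fun i => (p i).1) = f (fun i => (p i).2)
    · rw [if_pos h]
      symm
      apply Finset.prod_eq_one
      intro i _
      rw [if_pos]
      exact (congrFun h i).symm
    · rw [if_neg h]
      have : ∃ i, f (fun j => (p j).2) i ≠ (p i).1 := by
        by_contra hc
        push_neg at hc
        exact h (funext fun i => (hc i).symm)
      obtain ⟨i, hi⟩ := this
      symm
      apply Finset.prod_eq_zero (Finset.mem_univ i)
      rw [if_neg hi]
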